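/- Let f be the polyhedral convex function f(x) = max_{i=1,…,m}(⟨a_i,x⟩ − b_i) + δ_D(x) with D = {x : ⟨a_j,x⟩ ≤ b_j, j = m+1,…,l}, let x ∈ D and u ∈ ∂f(x). Then the set K(x,u) := {w ∈ T_D(x) : ⟨u,w⟩ = max_{i ∈ I(x)} ⟨a_i,w⟩} coincides with the set {w ∈ ℝⁿ : ∃ t̄ > 0 such that for all t ∈ (0, t̄), u ∈ ∂f(x + t w)}. -/

import Mathlib

open Matrix Set
open scoped Classical

noncomputable section

/-- The polyhedral feasible set D = {x : ⟨c_j, x⟩ ≤ d_j, j = 1,…,l}. -/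
def Dset (n l : ℕ) (c : Fin l → Fin n → ℝ) (d : Fin l → ℝ) : Set (Fin n → ℝ) :=
  {x | ∀ j, c j ⬝ᵥ x ≤ d j}

/-- max_{i=1,…,m} (⟨a_i, x⟩ − b_i). -/
def maxAff (n m : ℕ) (a : Fin m → Fin n → ℝ) (b : Fin m → ℝ) (x : Fin n → ℝ) : ℝ :=
  ⨆ i : Fin m, (a i ⬝ᵥ x - b i)

/-- The polyhedral convex function f(x) = max_{i=1,…,m}(⟨a_i,x⟩ − b_i) + δ_D(x). -/
def fpoly (n m l : ℕ) (a : Fin m → Fin n → ℝ) (b : Fin m → ℝ)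
    (c : Fin l → Fin n → ℝ) (d : Fin l → ℝ) (x : Fin n → ℝ) : EReal :=
  if x ∈ Dset n l c d then ((maxAff n m a b x : ℝ) : EReal) else ⊤

/-- The active index set I(x) = {i : f(x) = ⟨a_i,x⟩ − b_i}. -/
def Iact (n m l : ℕ) (a : Fin m → Fin n → ℝ) (b : Fin m → ℝ)
    (c : Fin l → Fin n → ℝ) (d : Fin l → ℝ) (x : Fin n → ℝ) : Set (Fin m) :=
  {i | fpoly n m l a b c d x = ((a i ⬝ᵥ x - b i : ℝ) : EReal)}

/-- The active constraint set J(x) = {j : ⟨a_j,x⟩ = b_j}. -/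
def Jact (n l : ℕ) (c : Fin l → Fin n → ℝ) (d : Fin l → ℝ) (x : Fin n → ℝ) : Set (Fin l) :=
  {j | c j ⬝ᵥ x = d j}

/-- The tangent cone T_D(x) = {w : ⟨a_j,w⟩ ≤ 0 for all j ∈ J(x)}. -/
def Tcone (n l : ℕ) (c : Fin l → Fin n → ℝ) (d : Fin l → ℝ) (x : Fin n → ℝ) :
    Set (Fin n → ℝ) :=
  {w | ∀ j ∈ Jact n l c d x, c j ⬝ᵥ w ≤ 0}

/-- I′(x,w) = {i ∈ I(x) : ⟨a_i,w⟩ = max_{j ∈ I(x)} ⟨a_j,w⟩}. -/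
def Iact' (n m l : ℕ) (a : Fin m → Fin n → ℝ) (b : Fin m → ℝ)
    (c : Fin l → Fin n → ℝ) (d : Fin l → ℝ) (x w : Fin n → ℝ) : Set (Fin m) :=
  {i ∈ Iact n m l a b c d x |
    a i ⬝ᵥ w = sSup ((fun j => a j ⬝ᵥ w) '' Iact n m l a b c d x)}

/-- J′(x,w) = {j ∈ J(x) : ⟨a_j,w⟩ = 0}. -/
def Jact' (n l : ℕ) (c : Fin l → Fin n → ℝ) (d : Fin l → ℝ) (x w : Fin n → ℝ) :
    Set (Fin l) :=
  {j ∈ Jact n l c d x | c j ⬝ᵥ w = 0}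

/-- The subdifferential ∂g(x₀) = {u : ∀x, g(x) ≥ g(x₀) + ⟨u, x − x₀⟩}. -/
def subdiff (n : ℕ) (g : (Fin n → ℝ) → EReal) (x₀ : Fin n → ℝ) : Set (Fin n → ℝ) :=
  {u | ∀ x : Fin n → ℝ, g x₀ + ((u ⬝ᵥ (x - x₀) : ℝ) : EReal) ≤ g x}

/-- for x ∈ D and u ∈ ∂f(x), the set
K(x,u) = {w ∈ T_D(x) : ⟨u,w⟩ = max_{i ∈ I(x)} ⟨a_i,w⟩} coincides with
{w : ∃ t̄ > 0 with u ∈ ∂f(x+tw) for all t ∈ (0,t̄)}. -/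
lemma exists_pos_le_all {k : ℕ} (δ : Fin k → ℝ) (hδ : ∀ i, 0 < δ i) :
    ∃ T : ℝ, 0 < T ∧ ∀ i, T ≤ δ i := by
  rcases Nat.eq_zero_or_pos k with hk | hk
  · exact ⟨1, one_pos, fun i => absurd i.isLt (by omega)⟩
  · refine ⟨Finset.univ.inf' ⟨⟨0, hk⟩, Finset.mem_univ _⟩ δ, ?_,
      fun i => Finset.inf'_le _ (Finset.mem_univ i)⟩
    exact (Finset.lt_inf'_iff _).mpr fun i _ => hδ i

theorem stmt7 (n m l : ℕ) (hm : 0 < m)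
    (a : Fin m → Fin n → ℝ) (b : Fin m → ℝ)
    (c : Fin l → Fin n → ℝ) (d : Fin l → ℝ)
    (x : Fin n → ℝ) (hx : x ∈ Dset n l c d)
    (u : Fin n → ℝ) (hu : u ∈ subdiff n (fpoly n m l a b c d) x) :
    {w : Fin n → ℝ | w ∈ Tcone n l c d x ∧
        u ⬝ᵥ w = sSup ((fun i => a i ⬝ᵥ w) '' Iact n m l a b c d x)} =
      {w : Fin n → ℝ | ∃ tb > (0 : ℝ), ∀ t ∈ Set.Ioo (0 : ℝ) tb,
        u ∈ subdiff n (fpoly n m l a b c d) (x + t • w)} := by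
  haveI : Nonempty (Fin m) := ⟨⟨0, hm⟩⟩
  set M := maxAff n m a b x with hM
  have hfx : fpoly n m l a b c d x = ((M : ℝ) : EReal) := by
    simp only [fpoly, if_pos hx, hM]
  have hAle : ∀ i, a i ⬝ᵥ x - b i ≤ M := by
    intro i; rw [hM, maxAff]
    exact le_ciSup (f := fun i => a i ⬝ᵥ x - b i)
      (Set.Finite.bddAbove (Set.finite_range _)) i
  have hIiff : ∀ i, i ∈ Iact n m l a b c d x ↔ a i ⬝ᵥ x - b i = M := by
    intro i
    simp only [Iact, Set.mem_setOf_eq, hfx, EReal.coe_eq_coe_iff]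
    exact eq_comm
  have hIne : ∃ i, i ∈ Iact n m l a b c d x := by
    obtain ⟨i0, hi0⟩ := Finite.exists_max (fun i => a i ⬝ᵥ x - b i)
    refine ⟨i0, (hIiff i0).mpr (le_antisymm (hAle i0) ?_)⟩
    rw [hM, maxAff]; exact ciSup_le hi0
  -- key small-t lemma
  have key : ∀ w ∈ Tcone n l c d x, ∃ tbar : ℝ, 0 < tbar ∧ ∀ t ∈ Set.Ioo (0:ℝ) tbar,
      fpoly n m l a b c d (x + t • w) =
        ((M + t * sSup ((fun i => a i ⬝ᵥ w) '' Iact n m l a b c d x) : ℝ) : EReal) := by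
    intro w hw
    set MI := sSup ((fun i => a i ⬝ᵥ w) '' Iact n m l a b c d x) with hMI
    have hsfin : ((fun i => a i ⬝ᵥ w) '' Iact n m l a b c d x).Finite := Set.toFinite _
    have hsne : ((fun i => a i ⬝ᵥ w) '' Iact n m l a b c d x).Nonempty := by
      obtain ⟨i0, hi0⟩ := hIne; exact ⟨_, ⟨i0, hi0, rfl⟩⟩
    obtain ⟨i1, hi1I, hi1⟩ : MI ∈ _ := hsne.csSup_mem hsfin
    have hle_MI : ∀ i ∈ Iact n m l a b c d x, a i ⬝ᵥ w ≤ MI :=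
      fun i hi => le_csSup hsfin.bddAbove ⟨i, hi, rfl⟩
    obtain ⟨T1, hT1pos, hT1⟩ := exists_pos_le_all
      (fun j : Fin l => if c j ⬝ᵥ x < d j then (d j - c j ⬝ᵥ x) / (|c j ⬝ᵥ w| + 1) else 1)
      (fun j => by split
                   · apply div_pos (by linarith [‹c j ⬝ᵥ x < d j›]) (by positivity)
                   · exact one_pos)
    obtain ⟨T2, hT2pos, hT2⟩ := exists_pos_le_all
      (fun i : Fin m => if a i ⬝ᵥ x - b i < M
        then (M - (a i ⬝ᵥ x - b i)) / (|a i ⬝ᵥ w - MI| + 1) else 1)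
      (fun i => by split
                   · apply div_pos (by linarith [‹a i ⬝ᵥ x - b i < M›]) (by positivity)
                   · exact one_pos)
    refine ⟨min T1 T2, lt_min hT1pos hT2pos, ?_⟩
    rintro t ⟨ht0, htlt⟩
    have htT1 : t < T1 := lt_of_lt_of_le htlt (min_le_left _ _)
    have htT2 : t < T2 := lt_of_lt_of_le htlt (min_le_right _ _)
    have hD : x + t • w ∈ Dset n l c d := by
      intro j
      rw [dotProduct_add, dotProduct_smul, smul_eq_mul]
      by_cases hj : c j ⬝ᵥ x < d j
      · have h1 : t < (d j - c j ⬝ᵥ x) / (|c j ⬝ᵥ w| + 1) := by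
          have := hT1 j; simp only [if_pos hj] at this; linarith
        have h2 : t * (|c j ⬝ᵥ w| + 1) ≤ ((d j - c j ⬝ᵥ x) / (|c j ⬝ᵥ w| + 1)) * (|c j ⬝ᵥ w| + 1) :=
          mul_le_mul_of_nonneg_right (le_of_lt h1) (by positivity)
        rw [div_mul_cancel₀ _ (by positivity)] at h2
        have h3 := le_abs_self (c j ⬝ᵥ w)
        nlinarith [abs_nonneg (c j ⬝ᵥ w)]
      · have hje : c j ⬝ᵥ x = d j := le_antisymm (hx j) (not_lt.mp hj)
        have := hw j hje
        nlinarith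
    have hmax : maxAff n m a b (x + t • w) = M + t * MI := by
      rw [maxAff]
      apply le_antisymm
      · apply ciSup_le
        intro i
        rw [dotProduct_add, dotProduct_smul, smul_eq_mul]
        by_cases hi : i ∈ Iact n m l a b c d x
        · have h1 : a i ⬝ᵥ x - b i = M := (hIiff i).mp hi
          have h2 := hle_MI i hi
          nlinarith
        · have h1 : a i ⬝ᵥ x - b i < M :=
            lt_of_le_of_ne (hAle i) (fun h => hi ((hIiff i).mpr h))
          have h2 : t < (M - (a i ⬝ᵥ x - b i)) / (|a i ⬝ᵥ w - MI| + 1) := by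
            have := hT2 i; simp only [if_pos h1] at this; linarith
          have h3 : t * (|a i ⬝ᵥ w - MI| + 1)
              ≤ ((M - (a i ⬝ᵥ x - b i)) / (|a i ⬝ᵥ w - MI| + 1)) * (|a i ⬝ᵥ w - MI| + 1) :=
            mul_le_mul_of_nonneg_right (le_of_lt h2) (by positivity)
          rw [div_mul_cancel₀ _ (by positivity)] at h3
          have h4 := le_abs_self (a i ⬝ᵥ w - MI)
          nlinarith [abs_nonneg (a i ⬝ᵥ w - MI)]
      · have h5 : a i1 ⬝ᵥ (x + t • w) - b i1 = M + t * MI := by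
          rw [dotProduct_add, dotProduct_smul, smul_eq_mul]
          have h6 : a i1 ⬝ᵥ x - b i1 = M := (hIiff i1).mp hi1I
          have h7 : a i1 ⬝ᵥ w = MI := hi1
          rw [h7]; linarith
        have h8 := le_ciSup (f := fun i => a i ⬝ᵥ (x + t • w) - b i)
          (Set.Finite.bddAbove (Set.finite_range _)) i1
        simpa only [h5] using h8
    simp only [fpoly, if_pos hD, hmax]
  -- main equality
  ext w
  simp only [Set.mem_setOf_eq]
  constructor
  · rintro ⟨hwT, hwu⟩
    obtain ⟨tbar, htbar, hkey⟩ := key w hwT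
    refine ⟨tbar, htbar, ?_⟩
    intro t ht z
    have hft := hkey t ht
    have hz := hu z
    rw [hfx] at hz
    have harith : (M + t * sSup ((fun i => a i ⬝ᵥ w) '' Iact n m l a b c d x))
        + u ⬝ᵥ (z - (x + t • w)) = M + u ⬝ᵥ (z - x) := by
      have hd : z - (x + t • w) = (z - x) - t • w := by
        rw [sub_add_eq_sub_sub]
      rw [hd, dotProduct_sub, dotProduct_smul, smul_eq_mul, ← hwu]
      ring
    rw [hft, ← EReal.coe_add, harith, EReal.coe_add]
    exact hz
  · rintro ⟨tb, htb, hsub⟩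
    have hwT : w ∈ Tcone n l c d x := by
      intro j hj
      have h1 := hsub (tb / 2) ⟨by linarith, by linarith⟩
      have hD2 : x + (tb / 2) • w ∈ Dset n l c d := by
        by_contra hD2
        have h2 := h1 x
        rw [hfx] at h2
        simp only [fpoly, if_neg hD2, EReal.top_add_coe] at h2
        exact absurd h2 (by simp)
      have h3 := hD2 j
      rw [dotProduct_add, dotProduct_smul, smul_eq_mul] at h3
      have hje : c j ⬝ᵥ x = d j := hj
      nlinarith
    obtain ⟨tbar, htbar, hkey⟩ := key w hwT
    refine ⟨hwT, ?_⟩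
    set t1 := min tb tbar / 2 with ht1def
    have hmin : 0 < min tb tbar := lt_min htb htbar
    have ht1pos : 0 < t1 := by positivity
    have ht1a : t1 ∈ Set.Ioo (0:ℝ) tb := ⟨ht1pos, by
      have := min_le_left tb tbar; rw [ht1def]; linarith⟩
    have ht1b : t1 ∈ Set.Ioo (0:ℝ) tbar := ⟨ht1pos, by
      have := min_le_right tb tbar; rw [ht1def]; linarith⟩
    have hft1 := hkey t1 ht1b
    set MI := sSup ((fun i => a i ⬝ᵥ w) '' Iact n m l a b c d x) with hMI
    have e1 := hu (x + t1 • w)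
    rw [hfx, hft1, add_sub_cancel_left, dotProduct_smul, smul_eq_mul,
      ← EReal.coe_add, EReal.coe_le_coe_iff] at e1
    have e2 := hsub t1 ht1a x
    rw [hft1, hfx, sub_add_cancel_left, dotProduct_neg, dotProduct_smul, smul_eq_mul,
      ← EReal.coe_add, EReal.coe_le_coe_iff] at e2
    have h8 : t1 * (u ⬝ᵥ w) = t1 * MI := by nlinarith
    exact mul_left_cancel₀ (ne_of_gt ht1pos) h8
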